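/- Let R be a finite set of places of F_q(T) and define g(X^R) = 1 + (1/(q²-1))·∏_{x∈R}(q_x - 1) - (q/(q+1))·2^{#R-1}·Odd(R), where q_x = q^{deg x} and Odd(R) = 1 if all places in R have odd degree and 0 otherwise. Then g(X^R) is even if and only if either (1) q is even, or (2) q is odd, #R = 2, and both places in R have odd degree. -/

import Mathlib

open Finset

/-- If `q` is even, the genus identity forces `g` to be even. -/
private lemma aux_even_q {α : Type*} (q : ℕ) (R : Finset α) (deg : α → ℕ)
    (hdeg : ∀ x ∈ R, 1 ≤ deg x) (g : ℕ) (e : ℤ)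
    (hZ : (g : ℤ) * (((q:ℤ)+1) * ((q:ℤ)-1)) = ((q:ℤ)+1) * ((q:ℤ)-1)
        + ∏ x ∈ R, ((q:ℤ) ^ deg x - 1) - (q:ℤ) * ((q:ℤ)-1) * 2 ^ (R.card - 1) * e)
    (hqe : Even q) : Even g := by
  have h2 : ((q : ZMod 2)) = 0 := by
    rw [ZMod.natCast_eq_zero_iff]
    exact hqe.two_dvd
  have hc := congrArg (fun z : ℤ => (z : ZMod 2)) hZ
  push_cast at hc
  rw [h2] at hc
  have hprod : ∏ x ∈ R, ((0:ZMod 2) ^ deg x - 1) = 1 := by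
    rw [Finset.prod_congr rfl (fun x hx => ?_), Finset.prod_const_one]
    rw [zero_pow (by have := hdeg x hx; omega)]
    decide
  rw [hprod] at hc
  have hg0 : (g : ZMod 2) = 0 := by linear_combination (-1 : ZMod 2) * hc
  rw [ZMod.natCast_eq_zero_iff] at hg0
  exact even_iff_two_dvd.mpr hg0

/-- Parity of the genus of `X^R`: with
`g(X^R) = 1 + (1/(q²-1))·∏_{x∈R}(q_x - 1) - (q/(q+1))·2^{#R-1}·Odd(R)`,
where `q_x = q^{deg x}` and `Odd(R) = 1` iff all degrees in `R` are odd, the genus is even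
iff `q` is even, or `q` is odd, `#R = 2` and both places in `R` have odd degree. -/
theorem genus_even_iff {α : Type*} (q : ℕ) (hq : ∃ p n : ℕ, p.Prime ∧ 0 < n ∧ q = p ^ n)
    (R : Finset α) (deg : α → ℕ) (hcard : 2 ≤ R.card) (hcard2 : Even R.card)
    (hdeg : ∀ x ∈ R, 1 ≤ deg x) (g : ℕ)
    (hg : (g : ℚ) = 1 + (1 / ((q : ℚ) ^ 2 - 1)) * ∏ x ∈ R, ((q : ℚ) ^ deg x - 1)
        - ((q : ℚ) / ((q : ℚ) + 1)) * 2 ^ (R.card - 1) *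
          (if ∀ x ∈ R, Odd (deg x) then 1 else 0)) :
    Even g ↔ (Even q ∨ (Odd q ∧ R.card = 2 ∧ ∀ x ∈ R, Odd (deg x))) := by
  classical
  have hq2 : 2 ≤ q := by
    obtain ⟨p, n, hp, hn, rfl⟩ := hq
    have h1 : 1 < p ^ n := Nat.one_lt_pow (by omega) hp.one_lt
    omega
  have hq1Q : ((q:ℚ) + 1) ≠ 0 := by positivity
  have hqm1Q : ((q:ℚ) - 1) ≠ 0 := by
    have : (2:ℚ) ≤ (q:ℚ) := by exact_mod_cast hq2
    intro h; nlinarith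
  by_cases hall : ∀ x ∈ R, Odd (deg x)
  · -- all degrees odd
    have key : (g:ℚ) * (((q:ℚ)+1) * ((q:ℚ)-1)) = ((q:ℚ)+1) * ((q:ℚ)-1)
        + ∏ x ∈ R, ((q:ℚ) ^ deg x - 1)
        - (q:ℚ) * ((q:ℚ)-1) * 2 ^ (R.card - 1) := by
      rw [hg, if_pos hall]
      have hsq : ((q:ℚ)^2 - 1) ≠ 0 := by
        have : (q:ℚ)^2 - 1 = ((q:ℚ)+1) * ((q:ℚ)-1) := by ring
        rw [this]; exact mul_ne_zero hq1Q hqm1Q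
      field_simp
      ring
    have hZ : (g:ℤ) * (((q:ℤ)+1) * ((q:ℤ)-1)) = ((q:ℤ)+1) * ((q:ℤ)-1)
        + ∏ x ∈ R, ((q:ℤ) ^ deg x - 1) - (q:ℤ) * ((q:ℤ)-1) * 2 ^ (R.card - 1) := by
      exact_mod_cast key
    rcases Nat.even_or_odd q with hqe | hqo
    · have hge : Even g := by
        have hZ' : (g : ℤ) * (((q:ℤ)+1) * ((q:ℤ)-1)) = ((q:ℤ)+1) * ((q:ℤ)-1)
            + ∏ x ∈ R, ((q:ℤ) ^ deg x - 1) - (q:ℤ) * ((q:ℤ)-1) * 2 ^ (R.card - 1) * 1 := by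
          rw [mul_one]; exact hZ
        exact aux_even_q q R deg hdeg g 1 hZ' hqe
      simp [hge, hqe]
    · have hQ1Z : ((q:ℤ)+1) ≠ 0 := by positivity
      have hQm1Z : ((q:ℤ)-1) ≠ 0 := by
        have : (2:ℤ) ≤ (q:ℤ) := by exact_mod_cast hq2
        omega
      obtain ⟨r, hr⟩ := hqo
      have hQr : (q:ℤ) = 2*(r:ℤ) + 1 := by exact_mod_cast hr
      set m := R.card - 1 with hmdef
      have hm : R.card = m + 1 := by omega
      have hmodd : Odd m := by
        rw [hm, Nat.even_add_one] at hcard2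
        exact Nat.not_even_iff_odd.mp hcard2
      -- factor the product
      have hP : ∏ x ∈ R, ((q:ℤ) ^ deg x - 1)
          = (∏ x ∈ R, ∑ i ∈ Finset.range (deg x), (q:ℤ)^i) * ((q:ℤ)-1)^(m+1) := by
        rw [← hm]
        calc ∏ x ∈ R, ((q:ℤ) ^ deg x - 1)
            = ∏ x ∈ R, ((∑ i ∈ Finset.range (deg x), (q:ℤ)^i) * ((q:ℤ)-1)) :=
              Finset.prod_congr rfl (fun x _ => (geom_sum_mul (q:ℤ) (deg x)).symm)
          _ = (∏ x ∈ R, ∑ i ∈ Finset.range (deg x), (q:ℤ)^i) * ∏ _x ∈ R, ((q:ℤ)-1) :=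
              Finset.prod_mul_distrib
          _ = _ := by rw [Finset.prod_const]
      have hS1 : ((q:ℤ)+1) ∣ (∏ x ∈ R, ∑ i ∈ Finset.range (deg x), (q:ℤ)^i) - 1 := by
        have key2 : ((((∏ x ∈ R, ∑ i ∈ Finset.range (deg x), (q:ℤ)^i) - 1 : ℤ)) : ZMod (q+1)) = 0 := by
          push_cast
          have hqm : ((q : ZMod (q+1))) = -1 := by
            have h0 : ((q+1 : ℕ) : ZMod (q+1)) = 0 := ZMod.natCast_self _
            push_cast at h0
            linear_combination h0
          rw [hqm]
          have hone : ∏ x ∈ R, ∑ i ∈ Finset.range (deg x), (-1 : ZMod (q+1))^i = 1 := by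
            rw [Finset.prod_congr rfl (fun x hx => ?_), Finset.prod_const_one]
            rw [neg_one_geom_sum, if_neg (Nat.not_even_iff_odd.mpr (hall x hx))]
          rw [hone, sub_self]
        have := (ZMod.intCast_zmod_eq_zero_iff_dvd _ (q+1)).mp key2
        exact_mod_cast this
      obtain ⟨k, hk⟩ := hS1
      have hSk : ∏ x ∈ R, ∑ i ∈ Finset.range (deg x), (q:ℤ)^i = 1 + ((q:ℤ)+1)*k := by
        linarith
      rw [hP, hSk] at hZ
      have hE : (((g:ℤ)-1) * ((q:ℤ)+1)) * ((q:ℤ)-1)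
          = (((q:ℤ)-1)^m * (1 + ((q:ℤ)+1)*k) - 2^m * (q:ℤ)) * ((q:ℤ)-1) := by
        linear_combination hZ
      have hE2 : ((g:ℤ)-1) * ((q:ℤ)+1)
          = ((q:ℤ)-1)^m * (1 + ((q:ℤ)+1)*k) - 2^m * (q:ℤ) :=
        mul_right_cancel₀ hQm1Z hE
      rcases eq_or_ne R.card 2 with h2 | h2
      · -- #R = 2 : genus is even
        have hm1 : m = 1 := by omega
        rw [hm1] at hE2
        have h3 : ((g:ℤ)-1) * ((q:ℤ)+1) = (-1 + (((q:ℤ)-1))*k) * ((q:ℤ)+1) := by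
          linear_combination hE2
        have h4 : (g:ℤ) - 1 = -1 + ((q:ℤ)-1)*k := mul_right_cancel₀ hQ1Z h3
        have h5 : (g:ℤ) = 2 * ((r:ℤ)*k) := by
          rw [hQr] at h4
          linear_combination h4
        have hge : Even g := by
          rw [Nat.even_iff]
          generalize (r:ℤ) * k = w at h5
          omega
        simp only [hge, true_iff]
        exact Or.inr ⟨⟨r, hr⟩, h2, hall⟩
      · -- #R ≥ 4 : genus is odd
        have hm3 : 3 ≤ m := by
          have := Nat.odd_iff.mp hmodd
          omega
        obtain ⟨j, hj⟩ : ∃ j, m = 3 + j := ⟨m - 3, by omega⟩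
        have d1 : (2*((q:ℤ)+1)) ∣ (((q:ℤ)-1)^m + 2^m) := by
          have hrd : ((r:ℤ)+1) ∣ ((r:ℤ)^m + 1) := by
            have hd := sub_dvd_pow_sub_pow (r:ℤ) (-1) m
            rw [Odd.neg_one_pow hmodd, sub_neg_eq_add, sub_neg_eq_add] at hd
            exact hd
          obtain ⟨t, ht⟩ := hrd
          rw [hj] at ht ⊢
          exact ⟨2^(j+1)*t, by rw [hQr]; linear_combination (2:ℤ)^(3+j) * ht⟩
        have d2 : (2*((q:ℤ)+1)) ∣ (2^m * ((q:ℤ)+1)) := ⟨2^(2+j), by rw [hj]; ring⟩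
        have d3 : (2*((q:ℤ)+1)) ∣ (((q:ℤ)-1)^m * (((q:ℤ)+1)*k)) :=
          ⟨2^(2+j) * (r:ℤ)^(3+j) * k, by rw [hj, hQr]; ring⟩
        have hdvd : (2*((q:ℤ)+1)) ∣ ((g:ℤ)-1) * ((q:ℤ)+1) := by
          rw [hE2]
          have e1 : ((q:ℤ)-1)^m * (1 + ((q:ℤ)+1)*k) - 2^m * (q:ℤ)
              = ((((q:ℤ)-1)^m + 2^m) - 2^m * ((q:ℤ)+1)) + ((q:ℤ)-1)^m * (((q:ℤ)+1)*k) := by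
            ring
          rw [e1]
          exact dvd_add (dvd_sub d1 d2) d3
        obtain ⟨w, hw⟩ := hdvd
        have hgo2 : (g:ℤ) - 1 = 2*w :=
          mul_right_cancel₀ hQ1Z (by linear_combination hw)
        have hng : ¬ Even g := by
          rw [Nat.even_iff]
          omega
        constructor
        · intro h; exact absurd h hng
        · rintro (h | ⟨-, hc2, -⟩)
          · exact absurd ⟨r, hr⟩ (Nat.not_odd_iff_even.mpr h)
          · exact absurd hc2 h2
  · -- some degree even
    have key : (g:ℚ) * (((q:ℚ)+1) * ((q:ℚ)-1)) = ((q:ℚ)+1) * ((q:ℚ)-1)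
        + ∏ x ∈ R, ((q:ℚ) ^ deg x - 1) := by
      rw [hg, if_neg hall]
      have hsq : ((q:ℚ)^2 - 1) ≠ 0 := by
        have : (q:ℚ)^2 - 1 = ((q:ℚ)+1) * ((q:ℚ)-1) := by ring
        rw [this]; exact mul_ne_zero hq1Q hqm1Q
      field_simp
      ring
    have hZ : (g:ℤ) * (((q:ℤ)+1) * ((q:ℤ)-1)) = ((q:ℤ)+1) * ((q:ℤ)-1)
        + ∏ x ∈ R, ((q:ℤ) ^ deg x - 1) := by
      exact_mod_cast key
    rcases Nat.even_or_odd q with hqe | hqo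
    · have hge : Even g := by
        refine aux_even_q q R deg hdeg g 0 ?_ hqe
        rw [mul_zero]; linarith [hZ]
      simp [hge, hqe]
    · have hQ1Z : ((q:ℤ)+1) ≠ 0 := by positivity
      have hQm1Z : ((q:ℤ)-1) ≠ 0 := by
        have : (2:ℤ) ≤ (q:ℤ) := by exact_mod_cast hq2
        omega
      push_neg at hall
      obtain ⟨x0, hx0, hx0odd⟩ := hall
      have hx0even : Even (deg x0) := Nat.not_odd_iff_even.mp hx0odd
      obtain ⟨t, ht⟩ := hx0even
      have hfac : ∏ x ∈ R, ((q:ℤ) ^ deg x - 1)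
          = ((q:ℤ) ^ deg x0 - 1) * ∏ x ∈ R.erase x0, ((q:ℤ) ^ deg x - 1) :=
        (Finset.mul_prod_erase R _ hx0).symm
      have hdvd1 : ((q:ℤ)^2 - 1) ∣ ((q:ℤ) ^ deg x0 - 1) := by
        have : deg x0 = 2 * t := by omega
        rw [this, pow_mul]
        simpa using sub_dvd_pow_sub_pow ((q:ℤ)^2) 1 t
      have hdvd2 : (2:ℤ) ∣ ∏ x ∈ R.erase x0, ((q:ℤ) ^ deg x - 1) := by
        have hne : (R.erase x0).Nonempty := by
          rw [← Finset.card_pos, Finset.card_erase_of_mem hx0]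
          omega
        obtain ⟨y, hy⟩ := hne
        refine dvd_trans ?_ (Finset.dvd_prod_of_mem _ hy)
        have hQodd : Odd ((q:ℤ)) := by exact_mod_cast hqo
        have : Odd ((q:ℤ) ^ deg y) := hQodd.pow
        obtain ⟨c, hc⟩ := this
        exact ⟨c, by omega⟩
      obtain ⟨a, ha⟩ := hdvd1
      obtain ⟨b, hb⟩ := hdvd2
      rw [hfac, ha, hb] at hZ
      have h1 : ((g:ℤ)-1) * (((q:ℤ)+1) * ((q:ℤ)-1))
          = (2*(a*b)) * (((q:ℤ)+1) * ((q:ℤ)-1)) := by linear_combination hZ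
      have h2 : (g:ℤ) - 1 = 2*(a*b) :=
        mul_right_cancel₀ (mul_ne_zero hQ1Z hQm1Z) h1
      have hng : ¬ Even g := by
        rw [Nat.even_iff]
        generalize a * b = w at h2
        omega
      constructor
      · intro h; exact absurd h hng
      · rintro (h | ⟨-, -, h⟩)
        · exact absurd hqo (Nat.not_odd_iff_even.mpr h)
        · exact absurd (h x0 hx0) hx0odd
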